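/- Let F be a field with char(F) ≠ 2 and let α, α' ∈ F. The algebras A(α) and A(α') defined on basis e1, e2 by e1·e1 = (1/2)e1, e1·e2 = e2·e1 = (1/2)e2, e2·e2 = α·e1 (respectively α'·e1) are isomorphic if and only if α' = a²α for some nonzero a ∈ F. -/

import Mathlib

/-- Multiplication on `F × F` given by `e1·e1 = (1/2)e1`, `e1·e2 = e2·e1 = (1/2)e2`,
`e2·e2 = α·e1`, extended bilinearly. -/
def mul4 {F : Type*} [Field F] (α : F) (x y : F × F) : F × F :=
  ((1/2 : F) * x.1 * y.1 + α * x.2 * y.2,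
   (1/2 : F) * x.1 * y.2 + (1/2 : F) * x.2 * y.1)

theorem stmt_4 {F : Type*} [Field F] (hchar : ringChar F ≠ 2) (α α' : F) :
    (∃ f : (F × F) ≃ₗ[F] (F × F),
        ∀ x y : F × F, f (mul4 α x y) = mul4 α' (f x) (f y)) ↔
      ∃ a : F, a ≠ 0 ∧ α' = a ^ 2 * α := by
  have h2 : (2:F) ≠ 0 := Ring.two_ne_zero hchar
  constructor
  · rintro ⟨f, hf⟩
    have h1 := hf (1,0) (1,0)
    have h12 := hf (1,0) (0,1)
    have h3 := hf (0,1) (0,1)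
    have lhs1 : mul4 α ((1:F),(0:F)) (1,0) = (1/2 : F) • ((1:F),(0:F)) := by
      simp [mul4, Prod.smul_mk]
    have lhs2 : mul4 α ((1:F),(0:F)) (0,1) = (1/2 : F) • ((0:F),(1:F)) := by
      simp [mul4, Prod.smul_mk]
    have lhs3 : mul4 α ((0:F),(1:F)) (0,1) = α • ((1:F),(0:F)) := by
      simp [mul4, Prod.smul_mk]
    rw [lhs1, map_smul] at h1
    rw [lhs2, map_smul] at h12
    rw [lhs3, map_smul] at h3
    set u := f (1,0) with hu
    set v := f (0,1) with hv
    obtain ⟨p, q⟩ := u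
    obtain ⟨r, s⟩ := v
    simp only [mul4, Prod.smul_mk, smul_eq_mul, Prod.mk.injEq] at h1 h12 h3
    obtain ⟨e11, e12⟩ := h1
    obtain ⟨e21, e22⟩ := h12
    obtain ⟨e31, e32⟩ := h3
    field_simp at e11 e12 e21 e22 e31 e32
    by_cases hq : q = 0
    · subst hq
      have hp : p ≠ 0 := by
        intro hp0
        have hf0 : f (1,0) = f 0 := by
          rw [map_zero, ← hu, hp0]; exact Prod.ext rfl rfl
        have := f.injective hf0
        simp [Prod.ext_iff] at this
      have hp1 : p = 1 := mul_right_cancel₀ hp (by linear_combination -e11)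
      subst hp1
      have hs : s ≠ 0 := by
        intro hs0
        have hf0 : f (0,1) = f (r • ((1:F),(0:F))) := by
          rw [map_smul, ← hu, ← hv, hs0]
          exact Prod.ext (by show r = r * 1; ring) (by show (0:F) = r * 0; ring)
        have h21 := congrArg Prod.snd (f.injective hf0)
        simp at h21
      have hr : r = 0 := by
        have hrs : r * s = 0 := by
          have : r * s * 2 = 0 * 2 := by linear_combination -e32
          exact mul_right_cancel₀ h2 this
        rcases mul_eq_zero.mp hrs with h | h
        · exact h
        · exact absurd h hs
      subst hr
      have hαs : α = α' * (s * s) := by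
        refine mul_right_cancel₀ h2 ?_
        linear_combination e31
      refine ⟨s⁻¹, inv_ne_zero hs, ?_⟩
      have hsinv : s * s⁻¹ = 1 := mul_inv_cancel₀ hs
      linear_combination -s⁻¹^2 * hαs - α' * (s*s⁻¹+1) * hsinv
    · exfalso
      have h2p : 2 * p = 1 := mul_right_cancel₀ hq (by linear_combination -e12)
      have hs : s = 2 * (q * r) := by linear_combination 2 * e22 + s * h2p
      have hf0 : f (0,1) = f ((2*r) • ((1:F),(0:F))) := by
        rw [map_smul, ← hu, ← hv]
        refine Prod.ext ?_ ?_
        · show r = 2 * r * p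
          linear_combination -r * h2p
        · show s = 2 * r * q
          linear_combination hs
      have h21 := congrArg Prod.snd (f.injective hf0)
      simp at h21
  · rintro ⟨a, ha, rfl⟩
    refine ⟨(LinearEquiv.refl F F).prodCongr (LinearEquiv.smulOfNeZero F F a⁻¹ (inv_ne_zero ha)), ?_⟩
    intro x y
    have hinv : a * a⁻¹ = 1 := mul_inv_cancel₀ ha
    simp only [mul4, LinearEquiv.prodCongr_apply, LinearEquiv.refl_apply,
      LinearEquiv.smulOfNeZero_apply, Units.smul_def, Units.val_mk0,
      smul_eq_mul, Prod.mk.injEq]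
    constructor
    · linear_combination (-(α * x.2 * y.2) * (a * a⁻¹ + 1)) * hinv
    · ring
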